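/- Let X be a finite subset of α with n = |X| ≥ 3 so that I = I(n) ≥ 2. Let x⁺ ∈ α with x⁺ ∉ X and let x⁻ ∈ X, and suppose x⁺ < x_(I−1) and x_(I) ≤ x⁻. Set X' = (X \ {x⁻}) ∪ {x⁺}, so |X'| = n and the median index is unchanged. Then L(X') = ({x⁺} ∪ L(X)) \ {x_(I−1)} and R(X') = ({x_(I−1)} ∪ R(X)) \ {x⁻}. -/

import Mathlib

open Finset

/-- Median index `I(n) = ⌈n/2⌉`. -/
def medianIdx (n : ℕ) : ℕ := (n + 1) / 2

/-- 1-indexed rank of `x` in `X`: the number of elements of `X` that are `≤ x`.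
For `x ∈ X`, `rank X x = i` means `x` is the `i`-th smallest element of `X`. -/
def rank {α : Type*} [LinearOrder α] (X : Finset α) (x : α) : ℕ :=
  (X.filter (fun y => y ≤ x)).card

/-- Left part of the median partition: elements of rank `< I(|X|)`. -/
def medL {α : Type*} [LinearOrder α] (X : Finset α) : Finset α :=
  X.filter (fun x => rank X x < medianIdx X.card)

/-- Right part of the median partition: elements of rank `≥ I(|X|)`. -/
def medR {α : Type*} [LinearOrder α] (X : Finset α) : Finset α :=
  X.filter (fun x => medianIdx X.card ≤ rank X x)

private lemma rank_mono' {α : Type*} [LinearOrder α] (X : Finset α) {a b : α} (h : a ≤ b) :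
    rank X a ≤ rank X b := by
  apply Finset.card_le_card
  intro x hx
  simp only [Finset.mem_filter] at *
  exact ⟨hx.1, hx.2.trans h⟩

private lemma rank_lt' {α : Type*} [LinearOrder α] (X : Finset α) {a b : α}
    (hb : b ∈ X) (h : a < b) : rank X a < rank X b := by
  apply Finset.card_lt_card
  rw [Finset.ssubset_def]
  constructor
  · intro x hx
    simp only [Finset.mem_filter] at *
    exact ⟨hx.1, hx.2.trans h.le⟩
  · intro hsub
    have := hsub (Finset.mem_filter.mpr ⟨hb, le_refl b⟩)
    simp only [Finset.mem_filter] at this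
    exact absurd this.2 (not_le.mpr h)

private lemma rank_inj' {α : Type*} [LinearOrder α] (X : Finset α) {a b : α}
    (ha : a ∈ X) (hb : b ∈ X) (h : rank X a = rank X b) : a = b := by
  rcases lt_trichotomy a b with h1 | h1 | h1
  · exact absurd h (Nat.ne_of_lt (rank_lt' X hb h1))
  · exact h1
  · exact absurd h.symm (Nat.ne_of_lt (rank_lt' X ha h1))

private lemma rank_swap' {α : Type*} [LinearOrder α] (X : Finset α) {xm xp : α}
    (hxm : xm ∈ X) (hxp : xp ∉ X) (y : α) :
    rank ((X \ {xm}) ∪ {xp}) y + (if xm ≤ y then 1 else 0)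
      = rank X y + (if xp ≤ y then 1 else 0) := by
  have hd1 : Disjoint (X \ {xm}) ({xp} : Finset α) :=
    Finset.disjoint_singleton_right.mpr (fun h => hxp (Finset.mem_sdiff.mp h).1)
  have hd2 : Disjoint (X \ {xm}) ({xm} : Finset α) := Finset.sdiff_disjoint
  unfold rank
  rw [Finset.filter_union, Finset.card_union_of_disjoint (Finset.disjoint_filter_filter hd1)]
  have hX : (X \ {xm}) ∪ {xm} = X :=
    Finset.sdiff_union_of_subset (Finset.singleton_subset_iff.mpr hxm)
  conv_rhs => rw [← hX]
  rw [Finset.filter_union, Finset.card_union_of_disjoint (Finset.disjoint_filter_filter hd2)]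
  simp only [Finset.filter_singleton]
  split_ifs <;> simp

private lemma card_swap' {α : Type*} [LinearOrder α] (X : Finset α) {xm xp : α}
    (hxm : xm ∈ X) (hxp : xp ∉ X) :
    ((X \ {xm}) ∪ {xp}).card = X.card := by
  have hd1 : Disjoint (X \ {xm}) ({xp} : Finset α) :=
    Finset.disjoint_singleton_right.mpr (fun h => hxp (Finset.mem_sdiff.mp h).1)
  rw [Finset.card_union_of_disjoint hd1,
    Finset.card_sdiff_of_subset (Finset.singleton_subset_iff.mpr hxm)]
  have : 1 ≤ X.card := Finset.card_pos.mpr ⟨xm, hxm⟩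
  simp
  omega

theorem median_replace_left_right {α : Type*} [LinearOrder α]
    (X : Finset α) (hn : 3 ≤ X.card)
    (xIm1 : α) (hxIm1 : xIm1 ∈ X) (hrankm1 : rank X xIm1 = medianIdx X.card - 1)
    (xI : α) (hxI : xI ∈ X) (hrankI : rank X xI = medianIdx X.card)
    (xp : α) (hxp : xp ∉ X) (xm : α) (hxm : xm ∈ X)
    (hplt : xp < xIm1) (hmge : xI ≤ xm)
    (X' : Finset α) (hX' : X' = (X \ {xm}) ∪ {xp}) :
    medL X' = (insert xp (medL X)) \ {xIm1} ∧
    medR X' = (insert xIm1 (medR X)) \ {xm} := by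
  have hI2 : 2 ≤ medianIdx X.card := by unfold medianIdx; omega
  have hcard' : X'.card = X.card := by rw [hX']; exact card_swap' X hxm hxp
  have hI' : medianIdx X'.card = medianIdx X.card := by rw [hcard']
  have key : ∀ y, rank X' y + (if xm ≤ y then 1 else 0)
      = rank X y + (if xp ≤ y then 1 else 0) := by
    intro y; rw [hX']; exact rank_swap' X hxm hxp y
  have h1 : xIm1 < xI := by
    by_contra h
    push_neg at h
    have := rank_mono' X h
    omega
  have hpI : xp < xI := hplt.trans h1
  have hpm : xp < xm := hpI.trans_le hmge
  have hIm1m : xIm1 < xm := h1.trans_le hmge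
  have rp : rank X xp < medianIdx X.card - 1 := by
    have := rank_lt' X hxIm1 hplt; omega
  have rge : ∀ y, xI ≤ y → medianIdx X.card ≤ rank X y := by
    intro y h; have := rank_mono' X h; omega
  have hmem : ∀ y, y ∈ X' ↔ (y ∈ X ∧ y ≠ xm) ∨ y = xp := by
    intro y; rw [hX']; simp [Finset.mem_union, Finset.mem_sdiff]; exact Or.comm
  constructor
  · ext y
    simp only [medL, Finset.mem_filter, Finset.mem_sdiff, Finset.mem_insert,
      Finset.mem_singleton, hI', hmem y]
    have hkey := key y
    by_cases hy : y = xp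
    · subst hy
      have hxmy : ¬ xm ≤ y := not_le.mpr hpm
      simp only [if_pos le_rfl, if_neg hxmy] at hkey
      constructor
      · intro _; exact ⟨Or.inl rfl, ne_of_lt hplt⟩
      · intro _; exact ⟨Or.inr rfl, by omega⟩
    · by_cases hym : xm ≤ y
      · have hxpy : xp ≤ y := (hpm.trans_le hym).le
        simp only [if_pos hym, if_pos hxpy] at hkey
        have hge : medianIdx X.card ≤ rank X y := rge y (hmge.trans hym)
        constructor
        · rintro ⟨h, hlt⟩; omega
        · rintro ⟨h, _⟩
          rcases h with h | ⟨hyX, hlt⟩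
          · exact absurd h hy
          · omega
      · simp only [if_neg hym] at hkey
        by_cases hxpy : xp ≤ y
        · simp only [if_pos hxpy] at hkey
          constructor
          · rintro ⟨h, hlt⟩
            rcases h with ⟨hyX, hne⟩ | h
            · refine ⟨Or.inr ⟨hyX, by omega⟩, ?_⟩
              intro he; subst he; omega
            · exact absurd h hy
          · rintro ⟨h, hne⟩
            rcases h with h | ⟨hyX, hlt⟩
            · exact absurd h hy
            · refine ⟨Or.inl ⟨hyX, fun he => hym (he ▸ le_rfl)⟩, ?_⟩
              have : rank X y ≠ medianIdx X.card - 1 := by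
                intro he
                exact hne (rank_inj' X hyX hxIm1 (by omega))
              omega
        · have hyp : y < xp := not_le.mp hxpy
          simp only [if_neg hxpy] at hkey
          constructor
          · rintro ⟨h, hlt⟩
            rcases h with ⟨hyX, hne⟩ | h
            · exact ⟨Or.inr ⟨hyX, by omega⟩, ne_of_lt (hyp.trans hplt)⟩
            · exact absurd h hy
          · rintro ⟨h, hne⟩
            rcases h with h | ⟨hyX, hlt⟩
            · exact absurd h hy
            · have : rank X y < medianIdx X.card - 1 := by
                have := rank_lt' X hxIm1 (hyp.trans hplt); omega
              exact ⟨Or.inl ⟨hyX, fun he => hym (he ▸ le_rfl)⟩, by omega⟩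
  · ext y
    simp only [medR, Finset.mem_filter, Finset.mem_sdiff, Finset.mem_insert,
      Finset.mem_singleton, hI', hmem y]
    have hkey := key y
    by_cases hy : y = xp
    · subst hy
      have hxmy : ¬ xm ≤ y := not_le.mpr hpm
      simp only [if_pos le_rfl, if_neg hxmy] at hkey
      constructor
      · rintro ⟨h, hge⟩; omega
      · rintro ⟨h, hne⟩
        rcases h with h | ⟨hyX, _⟩
        · exact absurd h (ne_of_lt hplt)
        · exact absurd hyX hxp
    · by_cases hym : xm ≤ y
      · have hxpy : xp ≤ y := (hpm.trans_le hym).le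
        simp only [if_pos hym, if_pos hxpy] at hkey
        have hge : medianIdx X.card ≤ rank X y := rge y (hmge.trans hym)
        constructor
        · rintro ⟨h, _⟩
          rcases h with ⟨hyX, hne⟩ | h
          · exact ⟨Or.inr ⟨hyX, hge⟩, hne⟩
          · exact absurd h hy
        · rintro ⟨h, hne⟩
          rcases h with h | ⟨hyX, _⟩
          · subst h; exact absurd hym (not_le.mpr hIm1m)
          · exact ⟨Or.inl ⟨hyX, hne⟩, by omega⟩
      · simp only [if_neg hym] at hkey
        by_cases hxpy : xp ≤ y
        · simp only [if_pos hxpy] at hkey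
          constructor
          · rintro ⟨h, hge⟩
            rcases h with ⟨hyX, hne⟩ | h
            · by_cases hr : medianIdx X.card ≤ rank X y
              · exact ⟨Or.inr ⟨hyX, hr⟩, hne⟩
              · have hre : rank X y = medianIdx X.card - 1 := by omega
                exact ⟨Or.inl (rank_inj' X hyX hxIm1 (by omega)), hne⟩
            · exact absurd h hy
          · rintro ⟨h, hne⟩
            rcases h with h | ⟨hyX, hge⟩
            · subst h
              exact ⟨Or.inl ⟨hxIm1, hne⟩, by omega⟩
            · exact ⟨Or.inl ⟨hyX, hne⟩, by omega⟩
        · have hyp : y < xp := not_le.mp hxpy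
          simp only [if_neg hxpy] at hkey
          constructor
          · rintro ⟨h, hge⟩
            rcases h with ⟨hyX, hne⟩ | h
            · have : rank X y < medianIdx X.card - 1 := by
                have := rank_lt' X hxIm1 (hyp.trans hplt); omega
              omega
            · exact absurd h hy
          · rintro ⟨h, hne⟩
            rcases h with h | ⟨hyX, hge⟩
            · subst h; exact absurd (hyp.trans hplt) (lt_irrefl _)
            · have : rank X y < medianIdx X.card := by
                have := rank_lt' X hxIm1 (hyp.trans hplt); omega
              omega
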